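/- For every α ∈ (0, 1/2] and every ε with 0 < ε < (√α/(1-α))·log(1/α), one has e^{-(1-√α)ε} - α·e^{(1/√α - 1)ε} - (1-α)(1-ε) < 0. -/

import Mathlib

private lemma exp_lin_deriv (a x : ℝ) :
    HasDerivAt (fun y : ℝ => Real.exp (a * y)) (Real.exp (a * x) * a) x :=
  (Real.hasDerivAt_exp (a * x)).comp x (by simpa using (hasDerivAt_id x).const_mul a)

private lemma key (s : ℝ) (hs0 : 0 < s) (hs1 : s < 1) (ε : ℝ) (hε : 0 < ε) :
    Real.exp (-(1 - s) * ε) - s ^ 2 * Real.exp ((1 / s - 1) * ε)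
      - (1 - s ^ 2) * (1 - ε) < 0 := by
  set g : ℝ → ℝ := fun x => (1 - s ^ 2) - (1 - s) * Real.exp (-(1 - s) * x)
      - s * (1 - s) * Real.exp ((1 / s - 1) * x) with hg
  set f : ℝ → ℝ := fun x => Real.exp (-(1 - s) * x) - s ^ 2 * Real.exp ((1 / s - 1) * x)
      - (1 - s ^ 2) * (1 - x) with hf
  have hgderiv : ∀ x : ℝ, HasDerivAt g
      ((1 - s) ^ 2 * (Real.exp (-(1 - s) * x) - Real.exp ((1 / s - 1) * x))) x := by
    intro x
    have h := ((hasDerivAt_const x (1 - s ^ 2)).sub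
        ((exp_lin_deriv (-(1 - s)) x).const_mul (1 - s))).sub
        ((exp_lin_deriv (1 / s - 1) x).const_mul (s * (1 - s)))
    refine h.congr_deriv ?_
    field_simp
    ring
  have hfderiv : ∀ x : ℝ, HasDerivAt f (g x) x := by
    intro x
    have h := ((exp_lin_deriv (-(1 - s)) x).sub
        ((exp_lin_deriv (1 / s - 1) x).const_mul (s ^ 2))).sub
        (((hasDerivAt_const x (1 : ℝ)).sub (hasDerivAt_id x)).const_mul (1 - s ^ 2))
    refine h.congr_deriv ?_
    simp only [hg]
    field_simp
    ring
  have hgcont : ContinuousOn g (Set.Ici 0) :=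
    Continuous.continuousOn (by fun_prop)
  have hganti : StrictAntiOn g (Set.Ici 0) := by
    apply strictAntiOn_of_deriv_neg (convex_Ici 0) hgcont
    intro x hx
    rw [interior_Ici] at hx
    rw [(hgderiv x).deriv]
    apply mul_neg_of_pos_of_neg
    · exact pow_pos (by linarith : (0:ℝ) < 1 - s) 2
    · have h1 : -(1 - s) * x < (1 / s - 1) * x := by
        apply mul_lt_mul_of_pos_right _ hx
        have : 1 < 1 / s := (one_lt_div hs0).mpr hs1
        linarith
      simpa using Real.exp_lt_exp.mpr h1
  have hg0 : g 0 = 0 := by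
    simp only [hg, mul_zero, Real.exp_zero]
    ring
  have hgneg : ∀ x : ℝ, 0 < x → g x < 0 := by
    intro x hx
    have := hganti (Set.self_mem_Ici) (Set.mem_Ici.mpr hx.le) hx
    rwa [hg0] at this
  have hfcont : ContinuousOn f (Set.Ici 0) :=
    Continuous.continuousOn (by fun_prop)
  have hfanti : StrictAntiOn f (Set.Ici 0) := by
    apply strictAntiOn_of_deriv_neg (convex_Ici 0) hfcont
    intro x hx
    rw [interior_Ici] at hx
    rw [(hfderiv x).deriv]
    exact hgneg x hx
  have hf0 : f 0 = 0 := by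
    simp only [hf, mul_zero, Real.exp_zero, sub_zero, mul_one]
    ring
  have := hfanti (Set.self_mem_Ici) (Set.mem_Ici.mpr hε.le) hε
  rwa [hf0] at this

theorem stmt2 (α ε : ℝ) (hα : α ∈ Set.Ioc (0 : ℝ) (1 / 2)) (hε : 0 < ε)
    (hε' : ε < Real.sqrt α / (1 - α) * Real.log (1 / α)) :
    Real.exp (-(1 - Real.sqrt α) * ε) - α * Real.exp ((1 / Real.sqrt α - 1) * ε)
      - (1 - α) * (1 - ε) < 0 := by
  obtain ⟨hα0, hα12⟩ := hα
  have hs0 : 0 < Real.sqrt α := Real.sqrt_pos.mpr hα0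
  have hs1 : Real.sqrt α < 1 := by
    rw [show (1 : ℝ) = Real.sqrt 1 by simp]
    exact Real.sqrt_lt_sqrt hα0.le (by linarith)
  have h := key (Real.sqrt α) hs0 hs1 ε hε
  rwa [Real.sq_sqrt hα0.le] at h
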